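/- The matrix H = w·ee^T + diag(a), where e is the all-ones vector in R^n and a ∈ R^n has all positive entries, is positive definite if and only if 1 + w·∑_{i=1}^n (1/a_i) > 0. -/

import Mathlib

open Matrix


/-- H = w·ee^T + diag(a) with all a_i > 0 is positive definite iff 1 + w·∑ 1/a_i > 0. -/
theorem stmt_0 (n : ℕ) (hn : 1 ≤ n) (w : ℝ) (a : Fin n → ℝ) (ha : ∀ i, 0 < a i) :
    (Matrix.of fun i k : Fin n => w + if i = k then a i else 0).PosDef ↔
      0 < 1 + w * ∑ i, (a i)⁻¹ := by
  have hne : (Finset.univ : Finset (Fin n)).Nonempty := by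
    have : (0 : ℕ) < n := hn
    exact ⟨⟨0, this⟩, Finset.mem_univ _⟩
  set s : ℝ := ∑ i, (a i)⁻¹ with hs
  have hspos : 0 < s := Finset.sum_pos (fun i _ => inv_pos.2 (ha i)) hne
  -- quadratic form identity
  have hquad : ∀ x : Fin n → ℝ,
      dotProduct x ((Matrix.of fun i k : Fin n => w + if i = k then a i else 0) *ᵥ x)
        = w * (∑ i, x i) ^ 2 + ∑ i, a i * x i ^ 2 := by
    intro x
    have hmv : ∀ i, ((Matrix.of fun i k : Fin n => w + if i = k then a i else 0) *ᵥ x) i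
        = w * (∑ k, x k) + a i * x i := by
      intro i
      simp [Matrix.mulVec, dotProduct, add_mul, Finset.sum_add_distrib, ← Finset.mul_sum,
        Finset.sum_ite_eq, ite_mul]
    simp only [dotProduct, hmv]
    rw [Finset.sum_congr rfl
      (fun i _ => by ring :
        ∀ i ∈ Finset.univ, x i * (w * (∑ k, x k) + a i * x i)
          = (∑ k, x k) * (w * x i) + a i * x i ^ 2),
      Finset.sum_add_distrib, ← Finset.mul_sum, ← Finset.mul_sum]
    ring
  rw [Matrix.posDef_iff_dotProduct_mulVec]
  constructor
  · rintro ⟨-, hpd⟩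
    set x : Fin n → ℝ := fun i => (a i)⁻¹ with hx
    have hxne : x ≠ 0 := by
      intro h
      have := congrFun h ⟨0, hn⟩
      simp [hx] at this
      exact ne_of_gt (ha ⟨0, hn⟩) this
    have h1 := hpd (x := x) hxne
    rw [show star x = x from rfl, hquad] at h1
    have hsum : ∑ i, a i * x i ^ 2 = s := by
      refine Finset.sum_congr rfl fun i _ => ?_
      have hai := (ha i).ne'
      field_simp [hx]
      simp only [hx]; field_simp
    have hsx : ∑ i, x i = s := rfl
    rw [hsum, hsx] at h1
    have : 0 < s * (1 + w * s) := by nlinarith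
    nlinarith
  · rintro hpos
    refine ⟨?_, ?_⟩
    · ext i j
      simp only [Matrix.conjTranspose_apply, Matrix.of_apply, star_trivial]
      by_cases h : i = j
      · subst h; simp
      · simp [h, Ne.symm h]
    · intro x hx
      rw [show star x = x from rfl, hquad]
      have hQ : 0 < ∑ i, a i * x i ^ 2 := by
        obtain ⟨j, hj⟩ : ∃ j, x j ≠ 0 := by
          by_contra h
          push_neg at h
          exact hx (funext h)
        refine Finset.sum_pos' (fun i _ => mul_nonneg (ha i).le (sq_nonneg _)) ⟨j, Finset.mem_univ j, ?_⟩
        have := ha j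
        positivity
      have hcs : (∑ i, x i) ^ 2 ≤ s * ∑ i, a i * x i ^ 2 := by
        have h := Finset.sum_mul_sq_le_sq_mul_sq Finset.univ
          (fun i => Real.sqrt (a i)⁻¹) (fun i => Real.sqrt (a i) * x i)
        have h1 : ∀ i : Fin n, Real.sqrt (a i)⁻¹ * (Real.sqrt (a i) * x i) = x i := by
          intro i
          rw [← mul_assoc, ← Real.sqrt_mul (inv_nonneg.2 (ha i).le)]
          rw [inv_mul_cancel₀ (ne_of_gt (ha i))]
          simp
        have h2 : ∀ i : Fin n, (Real.sqrt (a i)⁻¹) ^ 2 = (a i)⁻¹ := fun i =>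
          Real.sq_sqrt (inv_nonneg.2 (ha i).le)
        have h3 : ∀ i : Fin n, (Real.sqrt (a i) * x i) ^ 2 = a i * x i ^ 2 := by
          intro i
          rw [mul_pow, Real.sq_sqrt (le_of_lt (ha i))]
        simp only [h1, h2, h3] at h
        exact h
      rcases le_or_gt 0 w with hw | hw
      · nlinarith
      · nlinarith
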